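/- Let λ₀ ∈ ℝ. Suppose F : ℝ → ℂ^{N×N} is twice continuously differentiable on [0,1], satisfies −F'' + V(x)F = λ₀F on [0,1], F(0) = T₋^⊥ and F'(0) = T₋ + aT₋^⊥; and suppose G : ℝ → ℂ^{N×N} is twice continuously differentiable on [0,1], satisfies −G'' + V(x)G = λ₀G + F on [0,1] with G(0) = G'(0) = 0. Let P be the orthogonal projector onto Ker(Γ₊F) = {h ∈ ℂ^N : (Γ₊F)·h = 0}. Then the matrix Z = (Γ₊G)·P + (Γ₊F)·(I − P) is invertible. -/

import Mathlib

open Matrix Set MeasureTheory intervalIntegral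

namespace ZMatrixAux

variable {N : ℕ}

lemma hasDerivAt_mulVec {A A' : ℝ → Matrix (Fin N) (Fin N) ℂ} {x : ℝ}
    (hA : ∀ i j, HasDerivAt (fun t => A t i j) (A' x i j) x) (h : Fin N → ℂ) (i : Fin N) :
    HasDerivAt (fun t => (A t *ᵥ h) i) ((A' x *ᵥ h) i) x := by
  simp only [mulVec, dotProduct]
  exact HasDerivAt.fun_sum fun j _ => (hA i j).mul_const (h j)

lemma hasDerivAt_pair {A A' B B' : ℝ → Matrix (Fin N) (Fin N) ℂ} {x : ℝ}
    (hA : ∀ i j, HasDerivAt (fun t => A t i j) (A' x i j) x)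
    (hB : ∀ i j, HasDerivAt (fun t => B t i j) (B' x i j) x) (h k : Fin N → ℂ) :
    HasDerivAt (fun t => star (A t *ᵥ h) ⬝ᵥ (B t *ᵥ k))
      (star (A' x *ᵥ h) ⬝ᵥ (B x *ᵥ k) + star (A x *ᵥ h) ⬝ᵥ (B' x *ᵥ k)) x := by
  simp only [dotProduct, Pi.star_apply, ← Finset.sum_add_distrib]
  exact HasDerivAt.fun_sum fun i _ =>
    ((hasDerivAt_mulVec hA h i).star.mul (hasDerivAt_mulVec hB k i))

lemma pair_eq (X Y : Matrix (Fin N) (Fin N) ℂ) (h k : Fin N → ℂ) :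
    star (X *ᵥ h) ⬝ᵥ (Y *ᵥ k) = star h ⬝ᵥ ((Xᴴ * Y) *ᵥ k) := by
  rw [star_mulVec, Matrix.dotProduct_mulVec, Matrix.dotProduct_mulVec, Matrix.vecMul_vecMul]

lemma pair_herm {M : Matrix (Fin N) (Fin N) ℂ} (hM : Mᴴ = M) (u w : Fin N → ℂ) :
    star (M *ᵥ u) ⬝ᵥ w = star u ⬝ᵥ (M *ᵥ w) := by
  rw [star_mulVec, hM, ← Matrix.dotProduct_mulVec]

lemma cont_pair {A C : ℝ → Matrix (Fin N) (Fin N) ℂ}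
    (hA : ∀ i j, ContinuousOn (fun t => A t i j) (Icc (0:ℝ) 1))
    (hC : ∀ i j, ContinuousOn (fun t => C t i j) (Icc (0:ℝ) 1)) (h k : Fin N → ℂ) :
    ContinuousOn (fun t => star (A t *ᵥ h) ⬝ᵥ (C t *ᵥ k)) (Icc (0:ℝ) 1) := by
  simp only [dotProduct, mulVec, Pi.star_apply]
  apply continuousOn_finset_sum
  intro i _
  exact ((continuousOn_finset_sum _ fun j _ => (hA i j).mul continuousOn_const).star).mul
    (continuousOn_finset_sum _ fun j _ => (hC i j).mul continuousOn_const)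

/-- Green's identity / Lagrange identity in integrated form. -/
lemma green (V : ℝ → Matrix (Fin N) (Fin N) ℂ)
    (hVh : ∀ x ∈ Icc (0:ℝ) 1, (V x)ᴴ = V x) (lam0 : ℝ)
    (A A' A'' B B' B'' C : ℝ → Matrix (Fin N) (Fin N) ℂ)
    (hA' : ∀ x ∈ Icc (0:ℝ) 1, ∀ i j, HasDerivAt (fun t => A t i j) (A' x i j) x)
    (hA'' : ∀ x ∈ Icc (0:ℝ) 1, ∀ i j, HasDerivAt (fun t => A' t i j) (A'' x i j) x)
    (hAeq : ∀ x ∈ Icc (0:ℝ) 1, A'' x = V x * A x - (lam0 : ℂ) • A x)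
    (hB' : ∀ x ∈ Icc (0:ℝ) 1, ∀ i j, HasDerivAt (fun t => B t i j) (B' x i j) x)
    (hB'' : ∀ x ∈ Icc (0:ℝ) 1, ∀ i j, HasDerivAt (fun t => B' t i j) (B'' x i j) x)
    (hBeq : ∀ x ∈ Icc (0:ℝ) 1, B'' x = V x * B x - (lam0 : ℂ) • B x - C x)
    (hCc : ∀ i j, ContinuousOn (fun t => C t i j) (Icc (0:ℝ) 1))
    (h k : Fin N → ℂ) :
    (star (A 1 *ᵥ h) ⬝ᵥ (B' 1 *ᵥ k) - star (A' 1 *ᵥ h) ⬝ᵥ (B 1 *ᵥ k))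
      - (star (A 0 *ᵥ h) ⬝ᵥ (B' 0 *ᵥ k) - star (A' 0 *ᵥ h) ⬝ᵥ (B 0 *ᵥ k))
    = - ∫ t in (0:ℝ)..1, star (A t *ᵥ h) ⬝ᵥ (C t *ᵥ k) := by
  have hIcc : uIcc (0:ℝ) 1 = Icc 0 1 := uIcc_of_le zero_le_one
  have hAc : ∀ i j, ContinuousOn (fun t => A t i j) (Icc (0:ℝ) 1) :=
    fun i j x hx => ((hA' x hx i j).continuousAt).continuousWithinAt
  have hderiv : ∀ x ∈ Icc (0:ℝ) 1,
      HasDerivAt (fun t => star (A t *ᵥ h) ⬝ᵥ (B' t *ᵥ k) - star (A' t *ᵥ h) ⬝ᵥ (B t *ᵥ k))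
        (-(star (A x *ᵥ h) ⬝ᵥ (C x *ᵥ k))) x := by
    intro x hx
    have h1 := (hasDerivAt_pair (hA' x hx) (hB'' x hx) h k).sub
      (hasDerivAt_pair (hA'' x hx) (hB' x hx) h k)
    convert h1 using 1
    case e'_4 => rfl
    case e'_8 => rfl
    have e1 : B'' x *ᵥ k = V x *ᵥ (B x *ᵥ k) - (lam0:ℂ) • (B x *ᵥ k) - C x *ᵥ k := by
      rw [hBeq x hx]; simp [Matrix.sub_mulVec, Matrix.smul_mulVec, Matrix.mulVec_mulVec]
    have e2 : A'' x *ᵥ h = V x *ᵥ (A x *ᵥ h) - (lam0:ℂ) • (A x *ᵥ h) := by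
      rw [hAeq x hx]; simp [Matrix.sub_mulVec, Matrix.smul_mulVec, Matrix.mulVec_mulVec]
    rw [e1, e2]
    have hherm := pair_herm (hVh x hx) (A x *ᵥ h) (B x *ᵥ k)
    simp only [dotProduct_sub, sub_dotProduct, star_sub, star_smul, dotProduct_smul,
      smul_dotProduct, Complex.star_def, Complex.conj_ofReal]
    rw [hherm]
    ring
  have hint : IntervalIntegrable (fun t => -(star (A t *ᵥ h) ⬝ᵥ (C t *ᵥ k))) volume 0 1 := by
    apply ContinuousOn.intervalIntegrable
    rw [hIcc]
    exact (cont_pair hAc hCc h k).neg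
  have := intervalIntegral.integral_eq_sub_of_hasDerivAt (f := fun t =>
      star (A t *ᵥ h) ⬝ᵥ (B' t *ᵥ k) - star (A' t *ᵥ h) ⬝ᵥ (B t *ᵥ k))
      (f' := fun t => -(star (A t *ᵥ h) ⬝ᵥ (C t *ᵥ k)))
      (by rw [hIcc]; exact hderiv) hint
  rw [intervalIntegral.integral_neg] at this
  rw [← this]

lemma boundary (Tp b f f' g g' : Matrix (Fin N) (Fin N) ℂ)
    (hTpH : Tpᴴ = Tp) (hTp2 : Tp * Tp = Tp) (hbH : bᴴ = b)
    (hb : b = (1 - Tp) * b * (1 - Tp)) :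
    ((1 - Tp) * f + Tp * f')ᴴ * ((1 - Tp) * (g' + b * g) - Tp * g)
      - ((1 - Tp) * (f' + b * f) - Tp * f)ᴴ * ((1 - Tp) * g + Tp * g')
    = fᴴ * g' - f'ᴴ * g := by
  have hQTp : (1 - Tp) * Tp = 0 := by simp [Matrix.sub_mul, hTp2]
  have hTpQ : Tp * (1 - Tp) = 0 := by simp [Matrix.mul_sub, hTp2]
  have hTpb : Tp * b = 0 := by
    rw [hb, ← Matrix.mul_assoc, ← Matrix.mul_assoc, hTpQ, Matrix.zero_mul, Matrix.zero_mul]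
  have hbTp : b * Tp = 0 := by
    rw [hb, Matrix.mul_assoc, hQTp, Matrix.mul_zero]
  have r1 : ∀ X : Matrix (Fin N) (Fin N) ℂ, Tp * (Tp * X) = Tp * X := by
    intro X; rw [← Matrix.mul_assoc, hTp2]
  have r2 : ∀ X : Matrix (Fin N) (Fin N) ℂ, Tp * (b * X) = 0 := by
    intro X; rw [← Matrix.mul_assoc, hTpb, Matrix.zero_mul]
  have r3 : ∀ X : Matrix (Fin N) (Fin N) ℂ, b * (Tp * X) = 0 := by
    intro X; rw [← Matrix.mul_assoc, hbTp, Matrix.zero_mul]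
  simp only [conjTranspose_mul, conjTranspose_add, conjTranspose_sub, conjTranspose_one,
    hTpH, hbH, Matrix.mul_add, Matrix.add_mul, Matrix.mul_sub, Matrix.sub_mul,
    Matrix.one_mul, Matrix.mul_one, Matrix.mul_assoc, r1, r2, r3, hTpb, hbTp,
    Matrix.zero_mul, Matrix.mul_zero, sub_zero, zero_sub, add_zero, zero_add]
  abel

end ZMatrixAux

open ZMatrixAux

/-- With `F` the fundamental solution at `λ₀` (boundary data at `0`),
`G = ∂F/∂λ`, and `P` the orthogonal projector onto `Ker(Γ₊F)`, the matrix
`Z = (Γ₊G)P + (Γ₊F)(I-P)` is invertible. -/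
theorem Z_matrix_invertible {N : ℕ} (hN : 1 ≤ N)
    (Tm Tp a b : Matrix (Fin N) (Fin N) ℂ)
    (hTmH : Tmᴴ = Tm) (hTm2 : Tm * Tm = Tm) (hTpH : Tpᴴ = Tp) (hTp2 : Tp * Tp = Tp)
    (haH : aᴴ = a) (ha : a = (1 - Tm) * a * (1 - Tm))
    (hbH : bᴴ = b) (hb : b = (1 - Tp) * b * (1 - Tp))
    (V : ℝ → Matrix (Fin N) (Fin N) ℂ)
    (hVc : ∀ i j, Continuous fun x => V x i j)
    (hVh : ∀ x ∈ Icc (0:ℝ) 1, (V x)ᴴ = V x)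
    (lam0 : ℝ)
    (F F' F'' G G' G'' : ℝ → Matrix (Fin N) (Fin N) ℂ)
    (hF' : ∀ x ∈ Icc (0:ℝ) 1, ∀ i j, HasDerivAt (fun t => F t i j) (F' x i j) x)
    (hF'' : ∀ x ∈ Icc (0:ℝ) 1, ∀ i j, HasDerivAt (fun t => F' t i j) (F'' x i j) x)
    (hF''c : ∀ i j, ContinuousOn (fun x => F'' x i j) (Icc (0:ℝ) 1))
    (hFeq : ∀ x ∈ Icc (0:ℝ) 1, -F'' x + V x * F x = (lam0 : ℂ) • F x)
    (hF0 : F 0 = 1 - Tm) (hF'0 : F' 0 = Tm + a * (1 - Tm))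
    (hG' : ∀ x ∈ Icc (0:ℝ) 1, ∀ i j, HasDerivAt (fun t => G t i j) (G' x i j) x)
    (hG'' : ∀ x ∈ Icc (0:ℝ) 1, ∀ i j, HasDerivAt (fun t => G' t i j) (G'' x i j) x)
    (hG''c : ∀ i j, ContinuousOn (fun x => G'' x i j) (Icc (0:ℝ) 1))
    (hGeq : ∀ x ∈ Icc (0:ℝ) 1, -G'' x + V x * G x = (lam0 : ℂ) • G x + F x)
    (hG0 : G 0 = 0) (hG'0 : G' 0 = 0)
    (P : Matrix (Fin N) (Fin N) ℂ) (hPH : Pᴴ = P) (hP2 : P * P = P)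
    (hPker : ∀ v : Fin N → ℂ,
      ((1 - Tp) * (F' 1 + b * F 1) - Tp * F 1) *ᵥ v = 0 ↔ P *ᵥ v = v) :
    IsUnit (((1 - Tp) * (G' 1 + b * G 1) - Tp * G 1) * P +
      ((1 - Tp) * (F' 1 + b * F 1) - Tp * F 1) * (1 - P)) := by
  classical
  set ΓF := (1 - Tp) * (F' 1 + b * F 1) - Tp * F 1 with hΓFdef
  set ΓG := (1 - Tp) * (G' 1 + b * G 1) - Tp * G 1 with hΓGdef
  set ΓoF := (1 - Tp) * F 1 + Tp * F' 1 with hΓoFdef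
  set ΓoG := (1 - Tp) * G 1 + Tp * G' 1 with hΓoGdef
  have h0mem : (0:ℝ) ∈ Icc (0:ℝ) 1 := ⟨le_refl 0, zero_le_one⟩
  have hFeq' : ∀ x ∈ Icc (0:ℝ) 1, F'' x = V x * F x - (lam0 : ℂ) • F x := by
    intro x hx; rw [← hFeq x hx]; abel
  have hGeq' : ∀ x ∈ Icc (0:ℝ) 1, G'' x = V x * G x - (lam0 : ℂ) • G x - F x := by
    intro x hx; rw [sub_sub, ← hGeq x hx]; abel
  have hFc : ∀ i j, ContinuousOn (fun t => F t i j) (Icc (0:ℝ) 1) :=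
    fun i j x hx => ((hF' x hx i j).continuousAt).continuousWithinAt
  -- main injectivity claim
  have hinj : ∀ v : Fin N → ℂ, (ΓG * P + ΓF * (1 - P)) *ᵥ v = 0 → v = 0 := by
    intro v hv
    set h₁ := P *ᵥ v with hh₁
    set h₂ := (1 - P) *ᵥ v with hh₂
    clear_value h₁ h₂
    have hZ : ΓG *ᵥ h₁ + ΓF *ᵥ h₂ = 0 := by
      rw [hh₁, hh₂, Matrix.mulVec_mulVec, Matrix.mulVec_mulVec, ← Matrix.add_mulVec]
      exact hv
    have hPh₁ : P *ᵥ h₁ = h₁ := by rw [hh₁, Matrix.mulVec_mulVec, hP2]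
    have hker1 : ΓF *ᵥ h₁ = 0 := (hPker h₁).mpr hPh₁
    -- Green's identities
    have green1 := green V hVh lam0 F F' F'' G G' G'' F hF' hF'' hFeq' hG' hG'' hGeq' hFc h₁ h₁
    have green2 := green V hVh lam0 F F' F'' F F' F'' (fun _ => 0) hF' hF'' hFeq'
      hF' hF'' (fun x hx => by rw [hFeq' x hx]; simp) (fun i j => continuousOn_const) h₁ h₂
    rw [hG0, hG'0] at green1
    simp only [Matrix.zero_mulVec, dotProduct_zero, sub_zero, zero_sub, neg_zero,
      sub_zero] at green1
    -- the (F,F) Wronskian at 0 vanishes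
    have hM0 : (F 0)ᴴ * F' 0 - (F' 0)ᴴ * F 0 = 0 := by
      rw [hF0, hF'0]
      have hQTm : (1 - Tm) * Tm = 0 := by simp [Matrix.sub_mul, hTm2]
      have hTmQ : Tm * (1 - Tm) = 0 := by simp [Matrix.mul_sub, hTm2]
      simp only [conjTranspose_add, conjTranspose_mul, conjTranspose_sub, conjTranspose_one,
        hTmH, haH, Matrix.mul_add, Matrix.add_mul, ← Matrix.mul_assoc, hQTm, hTmQ,
        Matrix.zero_mul, Matrix.mul_zero, zero_add, add_zero]
      abel
    have h0FF : star (F 0 *ᵥ h₁) ⬝ᵥ (F' 0 *ᵥ h₂) - star (F' 0 *ᵥ h₁) ⬝ᵥ (F 0 *ᵥ h₂) = 0 := by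
      rw [pair_eq, pair_eq, ← dotProduct_sub, ← Matrix.sub_mulVec, hM0]
      simp
    simp only [Matrix.zero_mulVec, dotProduct_zero, intervalIntegral.integral_zero,
      neg_zero] at green2
    rw [h0FF, sub_zero] at green2
    -- boundary identities
    have bdFG := boundary Tp b (F 1) (F' 1) (G 1) (G' 1) hTpH hTp2 hbH hb
    have bdFF := boundary Tp b (F 1) (F' 1) (F 1) (F' 1) hTpH hTp2 hbH hb
    have s1 : star (ΓoF *ᵥ h₁) ⬝ᵥ (ΓG *ᵥ h₁) - star (ΓF *ᵥ h₁) ⬝ᵥ (ΓoG *ᵥ h₁)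
        = star (F 1 *ᵥ h₁) ⬝ᵥ (G' 1 *ᵥ h₁) - star (F' 1 *ᵥ h₁) ⬝ᵥ (G 1 *ᵥ h₁) := by
      simp only [pair_eq, ← dotProduct_sub, ← Matrix.sub_mulVec]
      rw [hΓoFdef, hΓGdef, hΓFdef, hΓoGdef, bdFG]
    have s2 : star (ΓoF *ᵥ h₁) ⬝ᵥ (ΓF *ᵥ h₂) - star (ΓF *ᵥ h₁) ⬝ᵥ (ΓoF *ᵥ h₂)
        = star (F 1 *ᵥ h₁) ⬝ᵥ (F' 1 *ᵥ h₂) - star (F' 1 *ᵥ h₁) ⬝ᵥ (F 1 *ᵥ h₂) := by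
      simp only [pair_eq, ← dotProduct_sub, ← Matrix.sub_mulVec]
      rw [hΓoFdef, hΓFdef, bdFF]
    have hz : ∀ w : Fin N → ℂ, star (ΓF *ᵥ h₁) ⬝ᵥ w = 0 := by
      intro w; rw [hker1]; simp
    have key2 : star (ΓoF *ᵥ h₁) ⬝ᵥ (ΓF *ᵥ h₂) = 0 := by
      rw [hz, sub_zero] at s2
      exact s2.trans green2
    have hΓGh₁ : ΓG *ᵥ h₁ = -(ΓF *ᵥ h₂) := eq_neg_of_add_eq_zero_left hZ
    have key1 : star (F 1 *ᵥ h₁) ⬝ᵥ (G' 1 *ᵥ h₁) - star (F' 1 *ᵥ h₁) ⬝ᵥ (G 1 *ᵥ h₁) = 0 := by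
      rw [← s1, hz, sub_zero, hΓGh₁, dotProduct_neg, key2, neg_zero]
    have hint0 : ∫ t in (0:ℝ)..1, star (F t *ᵥ h₁) ⬝ᵥ (F t *ᵥ h₁) = 0 := by
      rw [key1] at green1
      exact neg_eq_zero.mp green1.symm
    -- pass to a real, nonnegative integrand
    set r : ℝ → ℝ := fun t => ∑ i, Complex.normSq ((F t *ᵥ h₁) i) with hrdef
    have hqr : ∀ t, star (F t *ᵥ h₁) ⬝ᵥ (F t *ᵥ h₁) = ((r t : ℝ) : ℂ) := by
      intro t
      rw [hrdef]
      push_cast [Complex.normSq_eq_conj_mul_self]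
      simp [dotProduct, Pi.star_apply, Complex.star_def]
    have hrint0 : (∫ t in (0:ℝ)..1, r t) = 0 := by
      simp only [hqr] at hint0
      rw [intervalIntegral.integral_ofReal] at hint0
      exact_mod_cast hint0
    have hrca : ∀ x ∈ Icc (0:ℝ) 1, ContinuousAt r x := by
      intro x hx
      apply tendsto_finset_sum
      intro i _
      exact (Complex.continuous_normSq.continuousAt).comp
        (hasDerivAt_mulVec (hF' x hx) h₁ i).continuousAt
    have hrnn : ∀ t, 0 ≤ r t := fun t => Finset.sum_nonneg fun i _ => Complex.normSq_nonneg _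
    have hrii : IntervalIntegrable r volume 0 1 := by
      apply ContinuousOn.intervalIntegrable
      rw [uIcc_of_le zero_le_one]
      exact fun x hx => (hrca x hx).continuousWithinAt
    have hr0 : ∀ t ∈ Icc (0:ℝ) 1, r t = 0 := by
      by_contra hcon
      push_neg at hcon
      obtain ⟨t₀, ht₀, hne⟩ := hcon
      have hpos : 0 < r t₀ := lt_of_le_of_ne (hrnn t₀) (Ne.symm hne)
      have hev : ∀ᶠ y in nhds t₀, 0 < r y := (hrca t₀ ht₀).eventually (eventually_gt_nhds hpos)
      rw [Metric.eventually_nhds_iff] at hev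
      obtain ⟨ε, hε, hball⟩ := hev
      set l := max 0 (t₀ - ε) with hl
      set u := min 1 (t₀ + ε) with hu
      have hlu : l < u := by
        rw [hl, hu]
        simp only [lt_min_iff, max_lt_iff]
        exact ⟨⟨zero_lt_one, by linarith [ht₀.2]⟩, by linarith [ht₀.1], by linarith⟩
      have hsub : Ioo l u ⊆ Function.support r ∩ Ioc 0 1 := by
        intro y hy
        have hy1 : t₀ - ε < y := lt_of_le_of_lt (le_max_right 0 (t₀ - ε)) hy.1
        have hy2 : y < t₀ + ε := hy.2.trans_le (min_le_right 1 (t₀ + ε))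
        have hry : 0 < r y := by
          apply hball
          rw [Real.dist_eq, abs_lt]
          constructor <;> linarith
        refine ⟨Function.mem_support.mpr hry.ne', ?_, ?_⟩
        · exact lt_of_le_of_lt (le_max_left 0 (t₀ - ε)) hy.1
        · exact le_of_lt (hy.2.trans_le (min_le_left 1 (t₀ + ε)))
      have hposI : 0 < ∫ t in (0:ℝ)..1, r t := by
        rw [intervalIntegral.integral_pos_iff_support_of_nonneg_ae'
          (Filter.Eventually.of_forall hrnn) hrii]
        exact ⟨zero_lt_one,
          lt_of_lt_of_le ((MeasureTheory.Measure.measure_Ioo_pos _).mpr hlu) (measure_mono hsub)⟩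
      rw [hrint0] at hposI
      exact lt_irrefl 0 hposI
    have hFt0 : ∀ t ∈ Icc (0:ℝ) 1, F t *ᵥ h₁ = 0 := by
      intro t ht
      funext i
      have hsum := hr0 t ht
      rw [hrdef] at hsum
      have := (Finset.sum_eq_zero_iff_of_nonneg
        (fun j _ => Complex.normSq_nonneg _)).mp hsum i (Finset.mem_univ i)
      simpa using Complex.normSq_eq_zero.mp this
    -- derivative of F *ᵥ h₁ at 0 within the interval
    have hF'0h₁ : F' 0 *ᵥ h₁ = 0 := by
      funext i
      have d1 : HasDerivWithinAt (fun t => (F t *ᵥ h₁) i) ((F' 0 *ᵥ h₁) i) (Icc (0:ℝ) 1) 0 :=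
        (hasDerivAt_mulVec (hF' 0 h0mem) h₁ i).hasDerivWithinAt
      have d2 : HasDerivWithinAt (fun t => (F t *ᵥ h₁) i) 0 (Icc (0:ℝ) 1) 0 := by
        refine (hasDerivWithinAt_const (0:ℝ) (Icc (0:ℝ) 1) (0:ℂ)).congr (fun t ht => ?_) ?_
        · simp [hFt0 t ht]
        · simp [hFt0 0 h0mem]
      have := UniqueDiffWithinAt.eq_deriv _ (uniqueDiffOn_Icc_zero_one 0 h0mem) d1 d2
      simpa using this
    -- conclude h₁ = 0
    have e0 : (1 - Tm) *ᵥ h₁ = 0 := by rw [← hF0]; exact hFt0 0 h0mem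
    have hTmh₁ : Tm *ᵥ h₁ = h₁ := by
      have : h₁ - Tm *ᵥ h₁ = 0 := by
        simpa [Matrix.sub_mulVec, Matrix.one_mulVec] using e0
      exact (sub_eq_zero.mp this).symm
    have h₁0 : h₁ = 0 := by
      have e1 : (Tm + a * (1 - Tm)) *ᵥ h₁ = 0 := by rw [← hF'0]; exact hF'0h₁
      rw [Matrix.add_mulVec, ← Matrix.mulVec_mulVec, e0, Matrix.mulVec_zero, add_zero,
        hTmh₁] at e1
      exact e1
    -- conclude h₂ = 0
    have hΓFh₂ : ΓF *ᵥ h₂ = 0 := by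
      rw [h₁0, Matrix.mulVec_zero, zero_add] at hZ
      exact hZ
    have hPh₂ : P *ᵥ h₂ = h₂ := (hPker h₂).mp hΓFh₂
    have h₂0 : h₂ = 0 := by
      have hP0 : P *ᵥ h₂ = 0 := by
        rw [hh₂, Matrix.mulVec_mulVec]
        have : P * (1 - P) = 0 := by rw [Matrix.mul_sub, Matrix.mul_one, hP2, sub_self]
        rw [this, Matrix.zero_mulVec]
      rw [← hPh₂, hP0]
    have hv12 : v = h₁ + h₂ := by
      rw [hh₁, hh₂, ← Matrix.add_mulVec]
      simp
    rw [hv12, h₁0, h₂0, add_zero]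
  -- conclude invertibility from injectivity
  rw [Matrix.isUnit_iff_isUnit_det, isUnit_iff_ne_zero]
  intro hdet
  obtain ⟨v, hv0, hv⟩ := Matrix.exists_mulVec_eq_zero_iff.mpr hdet
  exact hv0 (hinj v hv)
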